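/- Let u ∈ L¹([0,T];ℝ₊) with ∫₀^T u(s) ds > 0 and let l:ℝ→(0,+∞) be continuous. If for every pair of real numbers a ≤ 0 ≤ b the backward integral equations L_t = a − ∫_t^T u(s) l(L_s) ds and U_t = b + ∫_t^T u(s) l(U_s) ds both admit bounded continuous solutions on [0,T], then l belongs to the class LS, i.e. ∫_{−∞}^0 dx/l(x) = ∫₀^{+∞} dx/l(x) = +∞. (Lemma 3.1, necessity direction.) -/

import Mathlib

open MeasureTheory Set Filter Topology

noncomputable section

/-- The time interval `[0,T]`, where `0 < T ≤ +∞` is an extended real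
(understood as `[0,+∞)` when `T = +∞`). -/
def timeSet (T : EReal) : Set ℝ := {s : ℝ | 0 ≤ s ∧ (s : EReal) ≤ T}

lemma mono_of_right_local {g : ℝ → ℝ} {a b : ℝ} (hab : a ≤ b)
    (hg : ContinuousOn g (Icc a b))
    (hloc : ∀ x ∈ Ico a b, ∀ᶠ y in 𝓝[>] x, y ≤ b → g x ≤ g y) :
    g a ≤ g b := by
  have hclosed : IsClosed ({x | g a ≤ g x} ∩ Icc a b) := by
    have h := hg.preimage_isClosed_of_isClosed isClosed_Icc (isClosed_Ici (a := g a))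
    convert h using 1
    ext x
    simp only [mem_inter_iff, mem_setOf_eq, mem_preimage, mem_Ici, and_comm]
  have hsub : Icc a b ⊆ {x | g a ≤ g x} := by
    apply hclosed.Icc_subset_of_forall_exists_gt (le_refl (g a))
    intro x hx y hy
    have hx' : x ∈ Ico a b := hx.2
    have hxb : x < b := hx'.2
    have hmin : x < min y b := lt_min hy hxb
    have hIoc : Ioc x (min y b) ∈ 𝓝[>] x := Ioc_mem_nhdsGT_of_mem ⟨le_refl x, hmin⟩
    obtain ⟨z, hz1, hz2⟩ := ((hloc x hx').and (eventually_mem_set.2 hIoc)).exists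
    have hzb : z ≤ b := hz2.2.trans (min_le_right _ _)
    refine ⟨z, ⟨le_trans hx.1 (hz1 hzb), hz2.1, hz2.2.trans (min_le_left _ _)⟩⟩
  exact hsub (right_mem_Icc.2 hab)

lemma core_estimate (l : ℝ → ℝ) (hl_cont : Continuous l) (hl_pos : ∀ x, 0 < l x)
    (u U : ℝ → ℝ) (τ : ℝ) (hτ : 0 ≤ τ)
    (hu_int : IntegrableOn u (Icc 0 τ))
    (hu_nonneg : ∀ s ∈ Icc (0:ℝ) τ, 0 ≤ u s)
    (hU : ContinuousOn U (Icc 0 τ))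
    (hf_int : IntegrableOn (fun s => u s * l (U s)) (Icc 0 τ))
    (heq : ∀ t ∈ Icc (0:ℝ) τ, ∀ t' ∈ Icc (0:ℝ) τ, t ≤ t' →
      U t - U t' = ∫ s in Ioc t t', u s * l (U s)) :
    ∫ s in Ioc (0:ℝ) τ, u s ≤ ∫ x in Ioc (U τ) (U 0), 1 / l x := by
  have hinv_cont : Continuous (fun x => 1 / l x) :=
    continuous_const.div hl_cont (fun x => (hl_pos x).ne')
  have hinv_int : ∀ p q : ℝ, IntegrableOn (fun x => 1 / l x) (Ioc p q) :=
    fun p q => hinv_cont.integrableOn_Ioc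
  have hf_nonneg : ∀ s ∈ Icc (0:ℝ) τ, 0 ≤ u s * l (U s) :=
    fun s hs => mul_nonneg (hu_nonneg s hs) (hl_pos _).le
  have hmono : ∀ t ∈ Icc (0:ℝ) τ, ∀ t' ∈ Icc (0:ℝ) τ, t ≤ t' → U t' ≤ U t := by
    intro t ht t' ht' htt'
    have h1 := heq t ht t' ht' htt'
    have h2 : 0 ≤ ∫ s in Ioc t t', u s * l (U s) :=
      setIntegral_nonneg measurableSet_Ioc
        (fun s hs => hf_nonneg s ⟨le_trans ht.1 hs.1.le, hs.2.trans ht'.2⟩)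
    linarith
  have key : ∀ ε : ℝ, 0 < ε → ε < 1 →
      (1 - ε) * ∫ s in Ioc (0:ℝ) τ, u s ≤ ∫ x in Ioc (U τ) (U 0), 1 / l x := by
    intro ε hε0 hε1
    set g : ℝ → ℝ :=
      fun t => (∫ x in Ioc (U t) (U 0), 1 / l x) - (1 - ε) * ∫ s in Ioc (0:ℝ) t, u s with hg
    have hgτ : g 0 ≤ g τ := by
      apply mono_of_right_local hτ
      · -- continuity
        apply ContinuousOn.sub
        · have hF : Continuous (fun y : ℝ => ∫ x in y..(U 0), 1 / l x) := by
            have h := intervalIntegral.continuous_primitive (μ := volume)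
              (fun p q => hinv_cont.intervalIntegrable p q) (U 0) |>.neg
            refine h.congr fun y => ?_
            show -(∫ x in (U 0)..y, 1 / l x) = _
            rw [← intervalIntegral.integral_symm]
          apply ContinuousOn.congr (hF.comp_continuousOn hU)
          intro t ht
          have : U t ≤ U 0 := hmono 0 ⟨le_refl 0, hτ⟩ t ht ht.1
          simp only [Function.comp]
          rw [intervalIntegral.integral_of_le this]
        · exact continuousOn_const.mul (intervalIntegral.continuousOn_primitive (μ := volume) hu_int)
      · -- local step
        intro x hx
        have hxI : x ∈ Icc (0:ℝ) τ := ⟨hx.1, hx.2.le⟩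
        obtain ⟨L0, hL0def⟩ : ∃ v : ℝ, v = l (U x) := ⟨_, rfl⟩
        have hL0 : 0 < L0 := hL0def ▸ hl_pos _
        obtain ⟨lo, hlodef⟩ : ∃ v : ℝ, v = L0 - ε / 2 * L0 := ⟨_, rfl⟩
        obtain ⟨hi, hhidef⟩ : ∃ v : ℝ, v = L0 + ε / 2 * L0 := ⟨_, rfl⟩
        have hεL : 0 < ε * L0 := mul_pos hε0 hL0
        have hεεL : 0 ≤ ε * ε * L0 := by positivity
        have h1εL : 0 < (1 - ε) * L0 := mul_pos (by linarith) hL0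
        have hlo : 0 < lo := by nlinarith
        have hhi : 0 < hi := by nlinarith
        have hlohi : (1 - ε) * hi ≤ lo := by nlinarith
        have hc : ContinuousWithinAt (fun s => l (U s)) (Icc 0 τ) x :=
          hl_cont.continuousAt.comp_continuousWithinAt (hU x hxI)
        have hev : ∀ᶠ s in 𝓝[Icc (0:ℝ) τ] x, l (U s) ∈ Ioo lo hi :=
          hc (Ioo_mem_nhds (by show lo < l (U x); rw [← hL0def]; nlinarith) (by show l (U x) < hi; rw [← hL0def]; nlinarith))
        obtain ⟨δ, hδ0, hball⟩ := Metric.mem_nhdsWithin_iff.1 hev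
        filter_upwards [Ioo_mem_nhdsGT_of_mem (⟨le_refl x, by linarith⟩ : x ∈ Ico x (x + δ))]
          with y hy hyτ
        have hxy : x ≤ y := hy.1.le
        have hyI : y ∈ Icc (0:ℝ) τ := ⟨le_trans hxI.1 hxy, hyτ⟩
        have hIccsub : Icc x y ⊆ Icc (0:ℝ) τ := Icc_subset_Icc hxI.1 hyτ
        have hbound : ∀ s ∈ Icc x y, lo < l (U s) ∧ l (U s) < hi := by
          intro s hs
          have h1 : s ∈ Metric.ball x δ := by
            rw [Metric.mem_ball, Real.dist_eq, abs_lt]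
            constructor <;> [linarith [hs.1]; linarith [hs.2, hy.2]]
          exact hball ⟨h1, hIccsub hs⟩
        have hUyx : U y ≤ U x := hmono x hxI y hyI hxy
        have hUx0 : U x ≤ U 0 := hmono 0 ⟨le_refl 0, hτ⟩ x hxI hxI.1
        have hUy0 : U y ≤ U 0 := le_trans hUyx hUx0
        have split1 : ∫ z in Ioc (U y) (U 0), 1 / l z
            = (∫ z in Ioc (U y) (U x), 1 / l z) + ∫ z in Ioc (U x) (U 0), 1 / l z := by
          rw [← setIntegral_union (Set.Ioc_disjoint_Ioc_of_le le_rfl) measurableSet_Ioc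
            (hinv_int _ _) (hinv_int _ _), Set.Ioc_union_Ioc_eq_Ioc hUyx hUx0]
        have split2 : ∫ s in Ioc (0:ℝ) y, u s
            = (∫ s in Ioc (0:ℝ) x, u s) + ∫ s in Ioc x y, u s := by
          rw [← setIntegral_union (Set.Ioc_disjoint_Ioc_of_le le_rfl) measurableSet_Ioc
            (hu_int.mono_set (Ioc_subset_Icc_self.trans (Icc_subset_Icc_right hx.2.le)))
            (hu_int.mono_set (Ioc_subset_Icc_self.trans hIccsub)),
            Set.Ioc_union_Ioc_eq_Ioc hxI.1 hxy]
        have heqxy : U x - U y = ∫ s in Ioc x y, u s * l (U s) := heq x hxI y hyI hxy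
        set Ju := ∫ s in Ioc x y, u s with hJudef
        have hJu : 0 ≤ Ju := setIntegral_nonneg measurableSet_Ioc
          (fun s hs => hu_nonneg s (hIccsub ⟨hs.1.le, hs.2⟩))
        have estA : lo * Ju ≤ U x - U y := by
          rw [heqxy, hJudef, ← integral_const_mul]
          apply setIntegral_mono_on
            ((hu_int.mono_set (Ioc_subset_Icc_self.trans hIccsub)).const_mul lo)
            (hf_int.mono_set (Ioc_subset_Icc_self.trans hIccsub))
            measurableSet_Ioc
          intro s hs
          have hs' : s ∈ Icc x y := ⟨hs.1.le, hs.2⟩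
          have h2 := (hbound s hs').1
          have h3 := hu_nonneg s (hIccsub hs')
          nlinarith
        have estB : (U x - U y) * (1 / hi) ≤ ∫ z in Ioc (U y) (U x), 1 / l z := by
          have hconst : ∫ _z in Ioc (U y) (U x), (1 / hi) = (U x - U y) * (1 / hi) := by
            rw [setIntegral_const, measureReal_def, Real.volume_Ioc, smul_eq_mul,
              ENNReal.toReal_ofReal (by linarith)]
          rw [← hconst]
          apply setIntegral_mono_on (integrableOn_const measure_Ioc_lt_top.ne)
            (hinv_int _ _) measurableSet_Ioc
          intro z hz
          obtain ⟨s, hs, hsz⟩ := intermediate_value_Icc' hxy (hU.mono hIccsub)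
            (⟨hz.1.le, hz.2⟩ : z ∈ Icc (U y) (U x))
          have : l z < hi := by rw [← hsz]; exact (hbound s hs).2
          apply one_div_le_one_div_of_le (hl_pos z) this.le
        have hfinal : U x - U y ≤ (∫ z in Ioc (U y) (U x), 1 / l z) * hi := by
          have h6 := mul_le_mul_of_nonneg_right estB hhi.le
          calc U x - U y = (U x - U y) * (1 / hi) * hi := by field_simp
          _ ≤ _ := h6
        have hstep : (1 - ε) * Ju ≤ ∫ z in Ioc (U y) (U x), 1 / l z := by
          have h5 : (1 - ε) * Ju * hi ≤ (∫ z in Ioc (U y) (U x), 1 / l z) * hi := by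
            nlinarith [mul_le_mul_of_nonneg_right hlohi hJu]
          exact le_of_mul_le_mul_right (by linarith) hhi
        simp only [hg]
        rw [split1, split2]
        linarith
    have hg0 : g 0 = 0 := by simp [hg, Set.Ioc_self]
    rw [hg0, hg] at hgτ
    linarith
  set J := ∫ s in Ioc (0:ℝ) τ, u s with hJdef
  set D := ∫ x in Ioc (U τ) (U 0), 1 / l x with hDdef
  have hJ0 : 0 ≤ J := setIntegral_nonneg measurableSet_Ioc
    (fun s hs => hu_nonneg s ⟨hs.1.le, hs.2⟩)
  by_contra hcon
  push_neg at hcon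
  have hD0 : 0 ≤ D := setIntegral_nonneg measurableSet_Ioc (fun x _ => by have := hl_pos x; positivity)
  have hJpos : 0 < J := lt_of_le_of_lt hD0 hcon
  have hε0 : 0 < (J - D) / (2 * J) := by
    apply div_pos (by linarith) (by linarith)
  have hε1 : (J - D) / (2 * J) < 1 := by
    rw [div_lt_one (by linarith)]; linarith
  have hk := key _ hε0 hε1
  have hmul : (J - D) / (2 * J) * J = (J - D) / 2 := by
    field_simp
  nlinarith [hk, hmul]

lemma main_side (S : Set ℝ) (hSm : MeasurableSet S) (τ : ℝ) (hτ : 0 < τ)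
    (hsub : Icc 0 τ ⊆ S)
    (u : ℝ → ℝ) (hu_nonneg : ∀ s ∈ S, 0 ≤ u s) (hu_int : IntegrableOn u S)
    (hJ : 0 < ∫ s in Ioc (0:ℝ) τ, u s)
    (l : ℝ → ℝ) (hl_cont : Continuous l) (hl_pos : ∀ x, 0 < l x)
    (hsol : ∀ b : ℝ, 0 ≤ b → ∃ U : ℝ → ℝ, ContinuousOn U S ∧ (∃ M, ∀ t ∈ S, |U t| ≤ M) ∧
        ∀ t ∈ S, U t = b + ∫ s in Ioi t ∩ S, u s * l (U s)) :
    ∫⁻ x in Ici (0:ℝ), ENNReal.ofReal (1 / l x) = ⊤ := by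
  set J := ∫ s in Ioc (0:ℝ) τ, u s with hJdef
  have hinv_cont : Continuous (fun x => 1 / l x) :=
    continuous_const.div hl_cont (fun x => (hl_pos x).ne')
  -- Step A : for each b ≥ 0 there is c ≥ b carrying at least ofReal J of mass
  have H : ∀ b : ℝ, 0 ≤ b → ∃ c, b ≤ c ∧
      ENNReal.ofReal J ≤ ∫⁻ x in Ioc b c, ENNReal.ofReal (1 / l x) := by
    intro b hb
    obtain ⟨U, hUc, ⟨M, hM⟩, hEq⟩ := hsol b hb
    have h0S : (0:ℝ) ∈ S := hsub ⟨le_refl 0, hτ.le⟩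
    have hτS : τ ∈ S := hsub ⟨hτ.le, le_refl τ⟩
    -- integrability of s ↦ u s * l (U s) on S
    have hu_sm : AEStronglyMeasurable u (volume.restrict S) := hu_int.aestronglyMeasurable
    have hU_am : AEMeasurable U (volume.restrict S) := hUc.aemeasurable hSm
    have hf_sm : AEStronglyMeasurable (fun s => u s * l (U s)) (volume.restrict S) :=
      (hu_sm.aemeasurable.mul (hl_cont.measurable.comp_aemeasurable hU_am)).aestronglyMeasurable
    have hM0 : 0 ≤ M := le_trans (abs_nonneg _) (hM 0 h0S)
    obtain ⟨z, hzmem, hzmax⟩ := isCompact_Icc.exists_isMaxOn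
      (nonempty_Icc.2 (by linarith : -M ≤ M)) hl_cont.continuousOn
    have hf_int : IntegrableOn (fun s => u s * l (U s)) S := by
      refine Integrable.mono' (hu_int.abs.const_mul (l z)) hf_sm ?_
      rw [ae_restrict_iff' hSm]
      refine ae_of_all _ fun s hs => ?_
      have hUs : U s ∈ Icc (-M) M := abs_le.1 (hM s hs)
      have h1 : l (U s) ≤ l z := hzmax hUs
      have h2 : (0:ℝ) < l (U s) := hl_pos _
      rw [Real.norm_eq_abs, abs_mul, abs_of_pos h2]
      calc |u s| * l (U s) ≤ |u s| * l z := by nlinarith [abs_nonneg (u s)]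
      _ = l z * |u s| := mul_comm _ _
    have hf_nonneg : ∀ s ∈ S, 0 ≤ u s * l (U s) :=
      fun s hs => mul_nonneg (hu_nonneg s hs) (hl_pos _).le
    -- the pairwise integral equation on [0, τ]
    have heq : ∀ t ∈ Icc (0:ℝ) τ, ∀ t' ∈ Icc (0:ℝ) τ, t ≤ t' →
        U t - U t' = ∫ s in Ioc t t', u s * l (U s) := by
      intro t ht t' ht' htt'
      have hIocsub : Ioc t t' ⊆ S := fun s hs =>
        hsub ⟨le_trans ht.1 hs.1.le, hs.2.trans ht'.2⟩
      have hsplit : Ioi t ∩ S = Ioc t t' ∪ (Ioi t' ∩ S) := by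
        ext s
        simp only [mem_inter_iff, mem_Ioi, mem_Ioc, mem_union]
        constructor
        · rintro ⟨h1, h2⟩
          by_cases h3 : s ≤ t'
          · exact Or.inl ⟨h1, h3⟩
          · exact Or.inr ⟨lt_of_not_ge h3, h2⟩
        · rintro (⟨h1, h2⟩ | ⟨h1, h2⟩)
          · exact ⟨h1, hIocsub ⟨h1, h2⟩⟩
          · exact ⟨lt_of_le_of_lt htt' h1, h2⟩
      have hdisj : Disjoint (Ioc t t') (Ioi t' ∩ S) :=
        disjoint_left.2 fun s hs hs' => absurd hs'.1 (not_lt.2 hs.2)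
      have h1 := hEq t (hsub ht)
      have h2 := hEq t' (hsub ht')
      rw [h1, h2, hsplit, setIntegral_union hdisj (measurableSet_Ioi.inter hSm)
        (hf_int.mono_set hIocsub) (hf_int.mono_set inter_subset_right)]
      ring
    -- apply the core estimate
    have hcore := core_estimate l hl_cont hl_pos u U τ hτ.le
      (hu_int.mono_set hsub) (fun s hs => hu_nonneg s (hsub hs)) (hUc.mono hsub)
      (hf_int.mono_set hsub) heq
    -- b ≤ U τ and U τ ≤ U 0
    have hbUτ : b ≤ U τ := by
      have := hEq τ hτS
      have h3 : 0 ≤ ∫ s in Ioi τ ∩ S, u s * l (U s) :=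
        setIntegral_nonneg (measurableSet_Ioi.inter hSm)
          (fun s hs => hf_nonneg s hs.2)
      linarith
    have hUτ0 : U τ ≤ U 0 := by
      have := heq 0 ⟨le_refl 0, hτ.le⟩ τ ⟨hτ.le, le_refl τ⟩ hτ.le
      have h3 : 0 ≤ ∫ s in Ioc (0:ℝ) τ, u s * l (U s) :=
        setIntegral_nonneg measurableSet_Ioc
          (fun s hs => hf_nonneg s (hsub ⟨hs.1.le, hs.2⟩))
      linarith
    refine ⟨U 0, le_trans hbUτ hUτ0, ?_⟩
    have hinv_int : IntegrableOn (fun x => 1 / l x) (Ioc (U τ) (U 0)) :=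
      hinv_cont.integrableOn_Ioc
    have hofReal : ENNReal.ofReal (∫ x in Ioc (U τ) (U 0), 1 / l x)
        = ∫⁻ x in Ioc (U τ) (U 0), ENNReal.ofReal (1 / l x) :=
      ofReal_integral_eq_lintegral_ofReal hinv_int
        (ae_of_all _ fun x => by have := hl_pos x; positivity)
    calc ENNReal.ofReal J ≤ ENNReal.ofReal (∫ x in Ioc (U τ) (U 0), 1 / l x) :=
          ENNReal.ofReal_le_ofReal hcore
    _ = ∫⁻ x in Ioc (U τ) (U 0), ENNReal.ofReal (1 / l x) := hofReal
    _ ≤ ∫⁻ x in Ioc b (U 0), ENNReal.ofReal (1 / l x) :=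
          lintegral_mono_set (Ioc_subset_Ioc_left hbUτ)
  -- Step B : iterate to get infinite mass
  have H' : ∀ b : ℝ, ∃ c, 0 ≤ b → (b ≤ c ∧
      ENNReal.ofReal J ≤ ∫⁻ x in Ioc b c, ENNReal.ofReal (1 / l x)) := by
    intro b
    by_cases hb : 0 ≤ b
    · obtain ⟨c, hc⟩ := H b hb
      exact ⟨c, fun _ => hc⟩
    · exact ⟨0, fun h => absurd h hb⟩
  choose c hc using H'
  set seq : ℕ → ℝ := fun n => Nat.rec (motive := fun _ => ℝ) 0 (fun _ ih => c ih) n with hseq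
  have hseq0 : ∀ n, 0 ≤ seq n := by
    intro n
    induction n with
    | zero => exact le_refl 0
    | succ n ih => exact le_trans ih (hc (seq n) ih).1
  have hseqmono : ∀ n, seq n ≤ seq (n + 1) := fun n => (hc (seq n) (hseq0 n)).1
  have htel : ∀ n : ℕ, (n : ENNReal) * ENNReal.ofReal J
      ≤ ∫⁻ x in Ioc (0:ℝ) (seq n), ENNReal.ofReal (1 / l x) := by
    intro n
    induction n with
    | zero => simp
    | succ n ih =>
      have hsplit : Ioc (0:ℝ) (seq (n+1)) = Ioc (0:ℝ) (seq n) ∪ Ioc (seq n) (seq (n+1)) :=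
        (Set.Ioc_union_Ioc_eq_Ioc (hseq0 n) (hseqmono n)).symm
      rw [hsplit, lintegral_union measurableSet_Ioc (Set.Ioc_disjoint_Ioc_of_le le_rfl)]
      push_cast
      rw [add_mul, one_mul]
      exact add_le_add ih (hc (seq n) (hseq0 n)).2
  have hle : ∀ n : ℕ, (n : ENNReal) * ENNReal.ofReal J ≤ ∫⁻ x in Ici (0:ℝ), ENNReal.ofReal (1 / l x) :=
    fun n => le_trans (htel n) (lintegral_mono_set (fun x hx => le_of_lt hx.1))
  by_contra hA
  have hAlt : (∫⁻ x in Ici (0:ℝ), ENNReal.ofReal (1 / l x)) < ⊤ := lt_top_iff_ne_top.2 hA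
  have hJ0 : ENNReal.ofReal J ≠ 0 := by
    simp only [ne_eq, ENNReal.ofReal_eq_zero, not_le]
    exact hJ
  have hdiv : (∫⁻ x in Ici (0:ℝ), ENNReal.ofReal (1 / l x)) / ENNReal.ofReal J ≠ ⊤ :=
    (ENNReal.div_lt_top hA hJ0).ne
  obtain ⟨n, hn⟩ := ENNReal.exists_nat_gt hdiv
  have := hle n
  rw [← ENNReal.le_div_iff_mul_le (Or.inl hJ0) (Or.inl ENNReal.ofReal_ne_top)] at this
  exact absurd this (not_le.2 hn)

lemma neg_transfer (l : ℝ → ℝ)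
    (h : ∫⁻ x in Ici (0:ℝ), ENNReal.ofReal (1 / l (-x)) = ⊤) :
    ∫⁻ x in Iic (0:ℝ), ENNReal.ofReal (1 / l x) = ⊤ := by
  have hmp : MeasurePreserving (fun x : ℝ => -x) volume volume :=
    Measure.measurePreserving_neg _
  have hemb : MeasurableEmbedding (fun x : ℝ => -x) :=
    (Homeomorph.neg ℝ).measurableEmbedding
  have htrans := hmp.setLIntegral_comp_emb hemb
    (fun x => ENNReal.ofReal (1 / l x)) (Ici (0:ℝ))
  have himg : (fun x : ℝ => -x) '' Ici (0:ℝ) = Iic (0:ℝ) := by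
    ext y
    simp only [mem_image, mem_Ici, mem_Iic]
    constructor
    · rintro ⟨x, hx, rfl⟩; linarith
    · intro hy; exact ⟨-y, by linarith, by ring⟩
  rw [himg] at htrans
  rw [← htrans, h]
/-- **Lemma 3.1, necessity direction.** Let `u ∈ L¹([0,T];ℝ₊)` with `∫₀^T u(s) ds > 0` and let
`l : ℝ → (0,∞)` be continuous.  If for every `a ≤ 0 ≤ b` the backward equations
`L_t = a - ∫_t^T u(s) l(L_s) ds` and `U_t = b + ∫_t^T u(s) l(U_s) ds` both admit bounded
continuous solutions on `[0,T]`, then `l` belongs to the class `LS`, i.e.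
`∫_{-∞}^0 dx/l(x) = ∫_0^{+∞} dx/l(x) = +∞`. -/
theorem lemma_3_1_necessity
    (T : EReal) (hT : 0 < T)
    (u : ℝ → ℝ)
    (hu_nonneg : ∀ s ∈ timeSet T, 0 ≤ u s)
    (hu_int : IntegrableOn u (timeSet T))
    (hu_pos : 0 < ∫ s in timeSet T, u s)
    (l : ℝ → ℝ) (hl_cont : Continuous l) (hl_pos : ∀ x, 0 < l x)
    (hsol : ∀ a b : ℝ, a ≤ 0 → 0 ≤ b →
      (∃ L : ℝ → ℝ, ContinuousOn L (timeSet T) ∧ (∃ M, ∀ t ∈ timeSet T, |L t| ≤ M) ∧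
        ∀ t ∈ timeSet T, L t = a - ∫ s in Ioi t ∩ timeSet T, u s * l (L s)) ∧
      (∃ U : ℝ → ℝ, ContinuousOn U (timeSet T) ∧ (∃ M, ∀ t ∈ timeSet T, |U t| ≤ M) ∧
        ∀ t ∈ timeSet T, U t = b + ∫ s in Ioi t ∩ timeSet T, u s * l (U s))) :
    (∫⁻ x in Iic (0 : ℝ), ENNReal.ofReal (1 / l x) = ⊤) ∧
    (∫⁻ x in Ici (0 : ℝ), ENNReal.ofReal (1 / l x) = ⊤) := by
  -- reduce to a concrete description of the time set
  suffices main : ∀ S : Set ℝ, MeasurableSet S → timeSet T = S →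
      ∀ τ : ℝ, 0 < τ → Icc 0 τ ⊆ S → (0 < ∫ s in Ioc (0:ℝ) τ, u s) →
      (∫⁻ x in Iic (0 : ℝ), ENNReal.ofReal (1 / l x) = ⊤) ∧
      (∫⁻ x in Ici (0 : ℝ), ENNReal.ofReal (1 / l x) = ⊤) by
    induction T using EReal.rec with
    | bot => exact absurd hT (by simp)
    | coe τ =>
      have hτ : 0 < τ := by
        rw [← EReal.coe_zero, EReal.coe_lt_coe_iff] at hT
        exact hT
      have hS : timeSet (τ : EReal) = Icc 0 τ := by
        ext s
        simp only [timeSet, mem_setOf_eq, mem_Icc, EReal.coe_le_coe_iff]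
      have hJ : 0 < ∫ s in Ioc (0:ℝ) τ, u s := by
        rw [hS, MeasureTheory.integral_Icc_eq_integral_Ioc] at hu_pos
        exact hu_pos
      exact main (Icc 0 τ) measurableSet_Icc hS τ hτ (le_refl _) hJ
    | top =>
      have hS : timeSet (⊤ : EReal) = Ici 0 := by
        ext s
        simp only [timeSet, mem_setOf_eq, mem_Ici, le_top, and_true]
      rw [hS] at hu_int hu_pos
      have hmono : Monotone (fun n : ℕ => Ioc (0:ℝ) n) := by
        intro m n hmn
        exact Ioc_subset_Ioc_right (Nat.cast_le.2 hmn)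
      have hunion : (⋃ n : ℕ, Ioc (0:ℝ) n) = Ioi 0 := by
        ext x
        simp only [mem_iUnion, mem_Ioc, mem_Ioi]
        constructor
        · rintro ⟨n, h1, _⟩; exact h1
        · intro hx
          obtain ⟨n, hn⟩ := exists_nat_ge x
          exact ⟨n, hx, hn⟩
      have hint : IntegrableOn u (⋃ n : ℕ, Ioc (0:ℝ) n) := by
        rw [hunion]
        exact hu_int.mono_set Ioi_subset_Ici_self
      have hten := tendsto_setIntegral_of_monotone (fun n : ℕ => measurableSet_Ioc)
        hmono hint
      rw [hunion] at hten
      have hpos : 0 < ∫ s in Ioi (0:ℝ), u s := by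
        rw [← MeasureTheory.integral_Ici_eq_integral_Ioi]
        exact hu_pos
      have hev : ∀ᶠ n : ℕ in atTop, 0 < ∫ s in Ioc (0:ℝ) (n:ℝ), u s :=
        hten.eventually (eventually_gt_nhds hpos)
      obtain ⟨n, hn1, hn2⟩ := ((eventually_gt_atTop 0).and hev).exists
      have hτ : (0:ℝ) < n := Nat.cast_pos.2 hn1
      exact main (Ici 0) measurableSet_Ici hS n hτ
        (fun x hx => le_trans hx.1 (le_refl x) |> fun h => hx.1) hn2
  intro S hSm hST τ hτ hsub hJ
  rw [hST] at hu_nonneg hu_int hsol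
  constructor
  · -- negative side
    apply neg_transfer l
    apply main_side S hSm τ hτ hsub u hu_nonneg hu_int hJ
      (fun x => l (-x)) (hl_cont.comp continuous_neg) (fun x => hl_pos _)
    intro b hb
    obtain ⟨L, hLc, ⟨M, hM⟩, hLeq⟩ := (hsol (-b) b (by linarith) hb).1
    refine ⟨fun t => -(L t), hLc.neg, ⟨M, fun t ht => by simpa [abs_neg] using hM t ht⟩, ?_⟩
    intro t ht
    have := hLeq t ht
    simp only [neg_neg]
    rw [this]
    ring
  · exact main_side S hSm τ hτ hsub u hu_nonneg hu_int hJ l hl_cont hl_pos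
      (fun b hb => (hsol (-b) b (by linarith) hb).2)
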